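/- Let R be a regular commutative ring of prime characteristic p, let L ⊆ R be an ideal and u ∈ R. Writing ν_e = 1+p+...+p^{e−1}, we have for all e ≥ 1: u·(L^[p^e] : u^{ν_e}) ⊆ ((L^[p^{e−1}] : u^{ν_{e−1}}))^[p]. That is, multiplying the colon ideal (L^[p^e] : u^{ν_e}) by u lands in the p-th Frobenius power of the previous colon ideal. -/
import Mathlib


/-- The `q`-th Frobenius power of an ideal: the ideal generated by `q`-th powers of its
elements. -/
def fpow {R : Type*} [CommRing R] (q : ℕ) (J : Ideal R) : Ideal R :=
  Ideal.span ((fun a => a ^ q) '' (J : Set R))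

/-- `ν_e = 1 + p + ... + p^{e-1}`. -/
def nu (p e : ℕ) : ℕ := ∑ i ∈ Finset.range e, p ^ i

lemma fpow_span {R : Type*} [CommRing R] (p : ℕ) (hp : p.Prime) [CharP R p]
    (S : Set R) : fpow p (Ideal.span S) = Ideal.span ((fun a => a ^ p) '' S) := by
  haveI : Fact p.Prime := ⟨hp⟩
  apply le_antisymm
  · rw [fpow, Ideal.span_le]
    rintro _ ⟨a, ha, rfl⟩
    simp only [SetLike.mem_coe]
    induction ha using Submodule.span_induction with
    | mem x hx => exact Ideal.subset_span ⟨x, hx, rfl⟩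
    | zero => simp [zero_pow hp.ne_zero]
    | add x y _ _ hx hy => rw [add_pow_char]; exact Ideal.add_mem _ hx hy
    | smul r x _ hx =>
        rw [smul_eq_mul, mul_pow]
        exact Ideal.mul_mem_left _ _ hx
  · apply Ideal.span_mono
    exact Set.image_mono (Ideal.subset_span)

lemma fpow_fpow {R : Type*} [CommRing R] (p : ℕ) (hp : p.Prime) [CharP R p]
    (q : ℕ) (J : Ideal R) : fpow p (fpow q J) = fpow (q * p) J := by
  show fpow p (Ideal.span ((fun a => a ^ q) '' (J : Set R))) = fpow (q * p) J
  rw [fpow_span p hp, ← Set.image_comp, fpow]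
  congr 1
  ext x
  simp [Function.comp, ← pow_mul]

theorem stmt_4 {R : Type*} [CommRing R] (p : ℕ) (hp : p.Prime) [CharP R p]
    (u : R) (L : Ideal R)
    (hreg : ∀ (A : Ideal R) (v : R),
      (fpow p A).colon (Ideal.span {v ^ p}) = fpow p (A.colon (Ideal.span {v}))) :
    ∀ e : ℕ, 1 ≤ e →
      ∀ x ∈ (fpow (p ^ e) L).colon (Ideal.span {u ^ nu p e}),
        u * x ∈ fpow p ((fpow (p ^ (e - 1)) L).colon (Ideal.span {u ^ nu p (e - 1)})) := by
  intro e he x hx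
  rw [← hreg]
  rw [fpow_fpow p hp, ← pow_succ, Nat.sub_add_cancel he]
  rw [Ideal.mem_colon_span_singleton] at hx ⊢
  have hnu : nu p e = 1 + nu p (e - 1) * p := by
    obtain ⟨n, rfl⟩ := Nat.exists_eq_add_of_le' he
    simp [nu, Finset.sum_range_succ', Finset.sum_mul, ← pow_succ, add_comm]
  have h2 : u * x * (u ^ nu p (e - 1)) ^ p = x * u ^ nu p e := by
    rw [hnu, pow_add, ← pow_mul]; ring
  rw [h2]; exact hx
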